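/- A point (x, y) ∈ (0,1)^4 × (0,1) is a fixed point of the gradient-ascent vector field F — i.e. F_i(x,y) = 0 for i = 1,...,4 and F_5(x,y) = 0 — if and only if x^st(x,y) = x^o and y = y^o. -/

import Mathlib

/-- Δ(x,y) := x̃1·y + x̃2·ỹ + x3·y + x4·ỹ -/
noncomputable def Del (x1 x2 x3 x4 y : ℝ) : ℝ :=
  (1 - x1) * y + (1 - x2) * (1 - y) + x3 * y + x4 * (1 - y)

/-- Marginalized strategy x^st(x,y) := (x3·y + x4·ỹ)/Δ(x,y). -/
noncomputable def xst (x1 x2 x3 x4 y : ℝ) : ℝ :=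
  (x3 * y + x4 * (1 - y)) / Del x1 x2 x3 x4 y

/-- Stationary payoff u^st(x,y). -/
noncomputable def ust (u1 u2 u3 u4 x1 x2 x3 x4 y : ℝ) : ℝ :=
  xst x1 x2 x3 x4 y * y * u1 + xst x1 x2 x3 x4 y * (1 - y) * u2 +
  (1 - xst x1 x2 x3 x4 y) * y * u3 + (1 - xst x1 x2 x3 x4 y) * (1 - y) * u4

/-- Partial derivative of a function of z = (x1,x2,x3,x4,y) with respect to the j-th
coordinate. -/
noncomputable def pderiv5 (f : (Fin 5 → ℝ) → ℝ) (z : Fin 5 → ℝ) (j : Fin 5) : ℝ :=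
  deriv (fun t => f (Function.update z j t)) (z j)

/-- x^st as a function of z = (x1,x2,x3,x4,y). -/
noncomputable def xstZ (z : Fin 5 → ℝ) : ℝ := xst (z 0) (z 1) (z 2) (z 3) (z 4)

/-- u^st as a function of z = (x1,x2,x3,x4,y). -/
noncomputable def ustZ (u1 u2 u3 u4 : ℝ) (z : Fin 5 → ℝ) : ℝ :=
  ust u1 u2 u3 u4 (z 0) (z 1) (z 2) (z 3) (z 4)

/-- The gradient-ascent vector field: F_i = x_i(1−x_i)·∂u^st/∂x_i for i = 1,…,4 and
F_5 = −y(1−y)·∂u^st/∂y. -/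
noncomputable def Fvec (u1 u2 u3 u4 : ℝ) (z : Fin 5 → ℝ) (i : Fin 5) : ℝ :=
  if i = 4 then -(z 4 * (1 - z 4) * pderiv5 (ustZ u1 u2 u3 u4) z 4)
  else z i * (1 - z i) * pderiv5 (ustZ u1 u2 u3 u4) z i

/-- The Jacobian matrix of the gradient-ascent vector field at z. -/
noncomputable def Jmat (u1 u2 u3 u4 : ℝ) (z : Fin 5 → ℝ) : Matrix (Fin 5) (Fin 5) ℝ :=
  Matrix.of fun i j => pderiv5 (fun w => Fvec u1 u2 u3 u4 w i) z j

lemma hasDerivAt_xst_1 (x1 x2 x3 x4 y : ℝ) (hΔ : Del x1 x2 x3 x4 y ≠ 0) :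
    HasDerivAt (fun t => xst t x2 x3 x4 y)
      ((x3*y + x4*(1-y)) * y / (Del x1 x2 x3 x4 y)^2) x1 := by
  have hden : HasDerivAt (fun t => Del t x2 x3 x4 y) (-y) x1 := by
    have h : HasDerivAt (fun t : ℝ => (1-t)*y) (-y) x1 := by
      simpa using (((hasDerivAt_id x1).const_sub 1).mul_const y)
    unfold Del
    simpa using ((h.add_const ((1-x2)*(1-y))).add_const (x3*y)).add_const (x4*(1-y))
  have h := (hasDerivAt_const x1 (x3*y + x4*(1-y))).div hden hΔ
  unfold xst
  refine h.congr_deriv ?_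
  field_simp
  ring

lemma hasDerivAt_xst_2 (x1 x2 x3 x4 y : ℝ) (hΔ : Del x1 x2 x3 x4 y ≠ 0) :
    HasDerivAt (fun t => xst x1 t x3 x4 y)
      ((x3*y + x4*(1-y)) * (1-y) / (Del x1 x2 x3 x4 y)^2) x2 := by
  have hden : HasDerivAt (fun t => Del x1 t x3 x4 y) (-(1-y)) x2 := by
    have h : HasDerivAt (fun t : ℝ => (1-t)*(1-y)) (-(1-y)) x2 := by
      simpa using (((hasDerivAt_id x2).const_sub 1).mul_const (1-y))
    unfold Del
    simpa using (((h.const_add ((1-x1)*y)).add_const (x3*y)).add_const (x4*(1-y)))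
  have h := (hasDerivAt_const x2 (x3*y + x4*(1-y))).div hden hΔ
  unfold xst
  refine h.congr_deriv ?_
  field_simp
  ring

lemma hasDerivAt_xst_3 (x1 x2 x3 x4 y : ℝ) (hΔ : Del x1 x2 x3 x4 y ≠ 0) :
    HasDerivAt (fun t => xst x1 x2 t x4 y)
      (y * ((1-x1)*y + (1-x2)*(1-y)) / (Del x1 x2 x3 x4 y)^2) x3 := by
  have hden : HasDerivAt (fun t => Del x1 x2 t x4 y) y x3 := by
    have h : HasDerivAt (fun t : ℝ => t*y) y x3 := by
      simpa using (hasDerivAt_id x3).mul_const y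
    unfold Del
    simpa using ((h.const_add ((1-x1)*y + (1-x2)*(1-y))).add_const (x4*(1-y)))
  have hnum : HasDerivAt (fun t : ℝ => t * y + x4*(1-y)) y x3 := by
    simpa using ((hasDerivAt_id x3).mul_const y).add_const (x4*(1-y))
  have h := hnum.div hden hΔ
  unfold xst
  refine h.congr_deriv ?_
  congr 1
  unfold Del
  ring

lemma hasDerivAt_xst_4 (x1 x2 x3 x4 y : ℝ) (hΔ : Del x1 x2 x3 x4 y ≠ 0) :
    HasDerivAt (fun t => xst x1 x2 x3 t y)
      ((1-y) * ((1-x1)*y + (1-x2)*(1-y)) / (Del x1 x2 x3 x4 y)^2) x4 := by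
  have hden : HasDerivAt (fun t => Del x1 x2 x3 t y) (1-y) x4 := by
    have h : HasDerivAt (fun t : ℝ => t*(1-y)) (1-y) x4 := by
      simpa using (hasDerivAt_id x4).mul_const (1-y)
    unfold Del
    simpa using (h.const_add ((1-x1)*y + (1-x2)*(1-y) + x3*y))
  have hnum : HasDerivAt (fun t : ℝ => x3 * y + t*(1-y)) (1-y) x4 := by
    simpa using ((hasDerivAt_id x4).mul_const (1-y)).const_add (x3*y)
  have h := hnum.div hden hΔ
  unfold xst
  refine h.congr_deriv ?_
  congr 1
  unfold Del
  ring

lemma hasDerivAt_xst_y (x1 x2 x3 x4 y : ℝ) (hΔ : Del x1 x2 x3 x4 y ≠ 0) :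
    HasDerivAt (fun t => xst x1 x2 x3 x4 t)
      (((x3-x4) * Del x1 x2 x3 x4 y - (x3*y + x4*(1-y)) * (x2-x1+x3-x4))
        / (Del x1 x2 x3 x4 y)^2) y := by
  have hden : HasDerivAt (fun t => Del x1 x2 x3 x4 t) (x2-x1+x3-x4) y := by
    have h1 : HasDerivAt (fun t : ℝ => (1-x1)*t) (1-x1) y := by
      simpa using (hasDerivAt_id y).const_mul (1-x1)
    have h2 : HasDerivAt (fun t : ℝ => (1-x2)*(1-t)) (-(1-x2)) y := by
      simpa using ((hasDerivAt_id y).const_sub 1).const_mul (1-x2)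
    have h3 : HasDerivAt (fun t : ℝ => x3*t) x3 y := by
      simpa using (hasDerivAt_id y).const_mul x3
    have h4 : HasDerivAt (fun t : ℝ => x4*(1-t)) (-x4) y := by
      simpa using ((hasDerivAt_id y).const_sub 1).const_mul x4
    have := ((h1.add h2).add h3).add h4
    unfold Del
    refine this.congr_deriv ?_
    try ring
  have hnum : HasDerivAt (fun t : ℝ => x3 * t + x4*(1-t)) (x3-x4) y := by
    have h3 : HasDerivAt (fun t : ℝ => x3*t) x3 y := by
      simpa using (hasDerivAt_id y).const_mul x3
    have h4 : HasDerivAt (fun t : ℝ => x4*(1-t)) (-x4) y := by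
      simpa using ((hasDerivAt_id y).const_sub 1).const_mul x4
    refine (h3.add h4).congr_deriv ?_
    try ring
  exact hnum.div hden hΔ

lemma hasDerivAt_ust_comp (u1 u2 u3 u4 y : ℝ) {g : ℝ → ℝ} {g' t : ℝ}
    (hg : HasDerivAt g g' t) :
    HasDerivAt (fun s => g s * y * u1 + g s * (1-y) * u2 + (1 - g s) * y * u3
        + (1 - g s) * (1-y) * u4)
      (g' * (y*(u1-u3)+(1-y)*(u2-u4))) t := by
  have h := ((((hg.mul_const y).mul_const u1).add ((hg.mul_const (1-y)).mul_const u2)).add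
    ((((hg.const_sub 1).mul_const y).mul_const u3))).add
      (((hg.const_sub 1).mul_const (1-y)).mul_const u4)
  refine h.congr_deriv ?_
  ring

lemma hasDerivAt_ust_ycomp (u1 u2 u3 u4 : ℝ) {g : ℝ → ℝ} {g' t : ℝ}
    (hg : HasDerivAt g g' t) :
    HasDerivAt (fun s => g s * s * u1 + g s * (1-s) * u2 + (1 - g s) * s * u3
        + (1 - g s) * (1-s) * u4)
      (g' * (t*(u1-u3)+(1-t)*(u2-u4)) + (g t * (u1-u2) + (1 - g t) * (u3-u4))) t := by
  have h1 : HasDerivAt (fun s : ℝ => (1:ℝ) - s) (-1) t := (hasDerivAt_id t).const_sub 1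
  have h := ((((hg.mul (hasDerivAt_id t)).mul_const u1).add
      ((hg.mul h1).mul_const u2)).add
    (((hg.const_sub 1).mul (hasDerivAt_id t)).mul_const u3)).add
      (((hg.const_sub 1).mul h1).mul_const u4)
  refine h.congr_deriv ?_
  simp only [id_eq]
  ring

/-- (x,y) is a fixed point of the gradient-ascent field iff
x^st(x,y) = x^o and y = y^o. -/
theorem stmt15 (u1 u2 u3 u4 : ℝ)
    (h12 : u1 > u2) (h13 : u1 > u3) (h42 : u4 > u2) (h43 : u4 > u3)
    (x1 x2 x3 x4 y : ℝ)
    (h1 : x1 ∈ Set.Ioo (0 : ℝ) 1) (h2 : x2 ∈ Set.Ioo (0 : ℝ) 1)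
    (h3 : x3 ∈ Set.Ioo (0 : ℝ) 1) (h4 : x4 ∈ Set.Ioo (0 : ℝ) 1)
    (hy : y ∈ Set.Ioo (0 : ℝ) 1) :
    (∀ i : Fin 5, Fvec u1 u2 u3 u4 ![x1, x2, x3, x4, y] i = 0) ↔
      (xst x1 x2 x3 x4 y = (u4 - u3) / (u1 - u2 - u3 + u4) ∧
        y = (u4 - u2) / (u1 - u2 - u3 + u4)) := by
  obtain ⟨hx1a, hx1b⟩ := h1
  obtain ⟨hx2a, hx2b⟩ := h2
  obtain ⟨hx3a, hx3b⟩ := h3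
  obtain ⟨hx4a, hx4b⟩ := h4
  obtain ⟨hya, hyb⟩ := hy
  have hN : 0 < x3*y + x4*(1-y) :=
    add_pos (mul_pos hx3a hya) (mul_pos hx4a (by linarith))
  have hM : 0 < (1-x1)*y + (1-x2)*(1-y) :=
    add_pos (mul_pos (by linarith) hya) (mul_pos (by linarith) (by linarith))
  have hΔpos : 0 < Del x1 x2 x3 x4 y := by unfold Del; linarith
  have hΔ : Del x1 x2 x3 x4 y ≠ 0 := ne_of_gt hΔpos
  have hD : (0:ℝ) < u1 - u2 - u3 + u4 := by linarith
  have hDne : (u1 - u2 - u3 + u4 : ℝ) ≠ 0 := ne_of_gt hD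
  -- the partial derivative computations
  have e0 : (fun t => ustZ u1 u2 u3 u4 (Function.update ![x1,x2,x3,x4,y] 0 t))
      = fun t => ust u1 u2 u3 u4 t x2 x3 x4 y := by
    funext t
    rw [show Function.update ![x1,x2,x3,x4,y] (0 : Fin 5) t = ![t,x2,x3,x4,y] from by
      funext k; fin_cases k <;> simp]
    rfl
  have e1 : (fun t => ustZ u1 u2 u3 u4 (Function.update ![x1,x2,x3,x4,y] 1 t))
      = fun t => ust u1 u2 u3 u4 x1 t x3 x4 y := by
    funext t
    rw [show Function.update ![x1,x2,x3,x4,y] (1 : Fin 5) t = ![x1,t,x3,x4,y] from by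
      funext k; fin_cases k <;> simp]
    rfl
  have e2 : (fun t => ustZ u1 u2 u3 u4 (Function.update ![x1,x2,x3,x4,y] 2 t))
      = fun t => ust u1 u2 u3 u4 x1 x2 t x4 y := by
    funext t
    rw [show Function.update ![x1,x2,x3,x4,y] (2 : Fin 5) t = ![x1,x2,t,x4,y] from by
      funext k; fin_cases k <;> simp]
    rfl
  have e3 : (fun t => ustZ u1 u2 u3 u4 (Function.update ![x1,x2,x3,x4,y] 3 t))
      = fun t => ust u1 u2 u3 u4 x1 x2 x3 t y := by
    funext t
    rw [show Function.update ![x1,x2,x3,x4,y] (3 : Fin 5) t = ![x1,x2,x3,t,y] from by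
      funext k; fin_cases k <;> simp]
    rfl
  have e4 : (fun t => ustZ u1 u2 u3 u4 (Function.update ![x1,x2,x3,x4,y] 4 t))
      = fun t => ust u1 u2 u3 u4 x1 x2 x3 x4 t := by
    funext t
    rw [show Function.update ![x1,x2,x3,x4,y] (4 : Fin 5) t = ![x1,x2,x3,x4,t] from by
      funext k; fin_cases k <;> simp]
    rfl
  have P0 : pderiv5 (ustZ u1 u2 u3 u4) ![x1,x2,x3,x4,y] 0
      = (x3*y + x4*(1-y)) * y / (Del x1 x2 x3 x4 y)^2 * (y*(u1-u3)+(1-y)*(u2-u4)) := by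
    unfold pderiv5
    rw [e0]
    exact (hasDerivAt_ust_comp u1 u2 u3 u4 y (hasDerivAt_xst_1 x1 x2 x3 x4 y hΔ)).deriv
  have P1 : pderiv5 (ustZ u1 u2 u3 u4) ![x1,x2,x3,x4,y] 1
      = (x3*y + x4*(1-y)) * (1-y) / (Del x1 x2 x3 x4 y)^2 * (y*(u1-u3)+(1-y)*(u2-u4)) := by
    unfold pderiv5
    rw [e1]
    exact (hasDerivAt_ust_comp u1 u2 u3 u4 y (hasDerivAt_xst_2 x1 x2 x3 x4 y hΔ)).deriv
  have P2 : pderiv5 (ustZ u1 u2 u3 u4) ![x1,x2,x3,x4,y] 2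
      = y * ((1-x1)*y + (1-x2)*(1-y)) / (Del x1 x2 x3 x4 y)^2 * (y*(u1-u3)+(1-y)*(u2-u4)) := by
    unfold pderiv5
    rw [e2]
    exact (hasDerivAt_ust_comp u1 u2 u3 u4 y (hasDerivAt_xst_3 x1 x2 x3 x4 y hΔ)).deriv
  have P3 : pderiv5 (ustZ u1 u2 u3 u4) ![x1,x2,x3,x4,y] 3
      = (1-y) * ((1-x1)*y + (1-x2)*(1-y)) / (Del x1 x2 x3 x4 y)^2 * (y*(u1-u3)+(1-y)*(u2-u4)) := by
    unfold pderiv5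
    rw [e3]
    exact (hasDerivAt_ust_comp u1 u2 u3 u4 y (hasDerivAt_xst_4 x1 x2 x3 x4 y hΔ)).deriv
  have P4 : pderiv5 (ustZ u1 u2 u3 u4) ![x1,x2,x3,x4,y] 4
      = (((x3-x4) * Del x1 x2 x3 x4 y - (x3*y + x4*(1-y)) * (x2-x1+x3-x4))
          / (Del x1 x2 x3 x4 y)^2) * (y*(u1-u3)+(1-y)*(u2-u4))
        + (xst x1 x2 x3 x4 y * (u1-u2) + (1 - xst x1 x2 x3 x4 y) * (u3-u4)) := by
    unfold pderiv5
    rw [e4]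
    exact (hasDerivAt_ust_ycomp u1 u2 u3 u4 (hasDerivAt_xst_y x1 x2 x3 x4 y hΔ)).deriv
  have hc0 : 0 < (x3*y + x4*(1-y)) * y / (Del x1 x2 x3 x4 y)^2 :=
    div_pos (mul_pos hN hya) (pow_pos hΔpos 2)
  constructor
  · intro h
    have h0 := h 0
    have h4' := h 4
    rw [show Fvec u1 u2 u3 u4 ![x1,x2,x3,x4,y] 0
        = x1 * (1 - x1) * pderiv5 (ustZ u1 u2 u3 u4) ![x1,x2,x3,x4,y] 0 from by
      unfold Fvec; rw [if_neg (by decide)]; rfl, P0] at h0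
    rw [show Fvec u1 u2 u3 u4 ![x1,x2,x3,x4,y] 4
        = -(y * (1 - y) * pderiv5 (ustZ u1 u2 u3 u4) ![x1,x2,x3,x4,y] 4) from by
      unfold Fvec; rw [if_pos rfl]; rfl, P4] at h4'
    -- from h0 : A = 0
    have hA : y*(u1-u3)+(1-y)*(u2-u4) = 0 := by
      have hx : x1 * (1 - x1) ≠ 0 := ne_of_gt (mul_pos hx1a (by linarith))
      rcases mul_eq_zero.mp h0 with h' | h'
      · exact absurd h' hx
      · rcases mul_eq_zero.mp h' with h'' | h''
        · exact absurd h'' (ne_of_gt hc0)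
        · exact h''
    have hyy : y * (1 - y) ≠ 0 := ne_of_gt (mul_pos hya (by linarith))
    have hB : xst x1 x2 x3 x4 y * (u1-u2) + (1 - xst x1 x2 x3 x4 y) * (u3-u4) = 0 := by
      rw [hA, mul_zero, zero_add, neg_eq_zero] at h4'
      rcases mul_eq_zero.mp h4' with h' | h'
      · exact absurd h' hyy
      · exact h'
    constructor
    · rw [eq_div_iff hDne]
      linear_combination hB
    · rw [eq_div_iff hDne]
      linear_combination hA
  · rintro ⟨hs, hy'⟩
    have hA : y*(u1-u3)+(1-y)*(u2-u4) = 0 := by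
      rw [hy']
      field_simp
      ring
    have hB : xst x1 x2 x3 x4 y * (u1-u2) + (1 - xst x1 x2 x3 x4 y) * (u3-u4) = 0 := by
      rw [hs]
      field_simp
      ring
    intro i
    fin_cases i
    · show Fvec u1 u2 u3 u4 ![x1,x2,x3,x4,y] 0 = 0
      unfold Fvec
      rw [if_neg (by decide), P0, hA, mul_zero, mul_zero]
    · show Fvec u1 u2 u3 u4 ![x1,x2,x3,x4,y] 1 = 0
      unfold Fvec
      rw [if_neg (by decide), P1, hA, mul_zero, mul_zero]
    · show Fvec u1 u2 u3 u4 ![x1,x2,x3,x4,y] 2 = 0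
      unfold Fvec
      rw [if_neg (by decide), P2, hA, mul_zero, mul_zero]
    · show Fvec u1 u2 u3 u4 ![x1,x2,x3,x4,y] 3 = 0
      unfold Fvec
      rw [if_neg (by decide), P3, hA, mul_zero, mul_zero]
    · show Fvec u1 u2 u3 u4 ![x1,x2,x3,x4,y] 4 = 0
      unfold Fvec
      rw [if_pos rfl, P4, hA, hB, mul_zero, zero_add, mul_zero, neg_zero]
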